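/- For block sizes (2,1,3,2), the polynomial L_{(4,8)} = x_{3,4}·det[[x_{4,7},x_{4,8}],[x_{6,7},x_{6,8}]] + x_{3,5}·det[[x_{5,7},x_{5,8}],[x_{6,7},x_{6,8}]] is invariant under conjugation of the generic nilradical 8×8 matrix by every upper unitriangular matrix. Note the unusual middle structure: the first minor skips row 5 (its rows are {4,6}), yet invariance still holds. -/
import Mathlib

open Matrix

/-- Block map for the block sizes `(2,1,3,2)` of `gl(8)`:
blocks `{1,2}, {3}, {4,5,6}, {7,8}`. -/
def blk8 (i : Fin 8) : ℕ :=
  if (i : ℕ) < 2 then 0 else if (i : ℕ) < 3 then 1 else if (i : ℕ) < 6 then 2 else 3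

/-- `L_{(4,8)} = x_{3,4}·det[[x_{4,7},x_{4,8}],[x_{6,7},x_{6,8}]]
+ x_{3,5}·det[[x_{5,7},x_{5,8}],[x_{6,7},x_{6,8}]]` (the first minor skips row 5). -/
def L48 {K : Type*} [Field K] (X : Matrix (Fin 8) (Fin 8) K) : K :=
  X 2 3 * (X 3 6 * X 5 7 - X 3 7 * X 5 6) + X 2 4 * (X 4 6 * X 5 7 - X 4 7 * X 5 6)

set_option maxHeartbeats 4000000 in
/-- For block sizes `(2,1,3,2)`, the polynomial `L_{(4,8)}` is invariant under
conjugation of the generic nilradical matrix by every upper unitriangular matrix. -/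
theorem L48_N_invariant {K : Type*} [Field K] [CharZero K]
    (X g : Matrix (Fin 8) (Fin 8) K)
    (hX : ∀ a b : Fin 8, ¬ blk8 a < blk8 b → X a b = 0)
    (hg : ∀ a b : Fin 8, b < a → g a b = 0) (hg1 : ∀ a : Fin 8, g a a = 1) :
    L48 (g * X * g⁻¹) = L48 X := by
  have htri : g.BlockTriangular id := fun i j h => hg i j h
  have hdet : g.det = 1 := by
    rw [det_of_upperTriangular htri]
    simp [hg1]
  haveI : Invertible g := g.invertibleOfIsUnitDet (by simp [hdet])
  have hinv : g⁻¹.BlockTriangular id := blockTriangular_inv_of_blockTriangular htri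
  have hh : ∀ a b : Fin 8, b < a → g⁻¹ a b = 0 := fun a b h => hinv h
  have key : ∀ a b : Fin 8, (g * g⁻¹) a b = (1 : Matrix (Fin 8) (Fin 8) K) a b := by
    intro a b; rw [Matrix.mul_inv_of_invertible g]
  have hXz : X 0 0 = 0 ∧ X 0 1 = 0 ∧ X 1 0 = 0 ∧ X 1 1 = 0 ∧ X 2 0 = 0 ∧ X 2 1 = 0 ∧ X 2 2 = 0 ∧ X 3 0 = 0 ∧ X 3 1 = 0 ∧ X 3 2 = 0 ∧ X 3 3 = 0 ∧ X 3 4 = 0 ∧ X 3 5 = 0 ∧ X 4 0 = 0 ∧ X 4 1 = 0 ∧ X 4 2 = 0 ∧ X 4 3 = 0 ∧ X 4 4 = 0 ∧ X 4 5 = 0 ∧ X 5 0 = 0 ∧ X 5 1 = 0 ∧ X 5 2 = 0 ∧ X 5 3 = 0 ∧ X 5 4 = 0 ∧ X 5 5 = 0 ∧ X 6 0 = 0 ∧ X 6 1 = 0 ∧ X 6 2 = 0 ∧ X 6 3 = 0 ∧ X 6 4 = 0 ∧ X 6 5 = 0 ∧ X 6 6 = 0 ∧ X 6 7 = 0 ∧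 X 7 0 = 0 ∧ X 7 1 = 0 ∧ X 7 2 = 0 ∧ X 7 3 = 0 ∧ X 7 4 = 0 ∧ X 7 5 = 0 ∧ X 7 6 = 0 ∧ X 7 7 = 0 := ⟨hX 0 0 (by decide), hX 0 1 (by decide), hX 1 0 (by decide), hX 1 1 (by decide), hX 2 0 (by decide), hX 2 1 (by decide), hX 2 2 (by decide), hX 3 0 (by decide), hX 3 1 (by decide), hX 3 2 (by decide), hX 3 3 (by decide), hX 3 4 (by decide), hX 3 5 (by decide), hX 4 0 (by decide), hX 4 1 (by decide), hX 4 2 (by decide), hX 4 3 (by decide), hX 4 4 (by decide), hX 4 5 (by decide), hX 5 0 (by decide), hX 5 1 (by decide), hX 5 2 (by decide), hX 5 3 (by decide), hX 5 4 (by decide), hX 5 5 (by decide), hX 6 0 (by decide), hX 6 1 (by decide), hX 6 2 (by decide), hX 6 3 (by decide), hX 6 4 (by decide), hX 6 5 (by decide), hX 6 6 (by decide), hX 6 7 (by decide), hX 7 0 (by decide), hX 7 1 (by decide), hX 7 2 (by decide), hX 7 3 (by decide), hX 7 4 (by decide), hX 7 5 (by decide), hX 7 6 (by decide), hX 7 7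 (by decide)⟩
  have hgz : g 1 0 = 0 ∧ g 2 0 = 0 ∧ g 2 1 = 0 ∧ g 3 0 = 0 ∧ g 3 1 = 0 ∧ g 3 2 = 0 ∧ g 4 0 = 0 ∧ g 4 1 = 0 ∧ g 4 2 = 0 ∧ g 4 3 = 0 ∧ g 5 0 = 0 ∧ g 5 1 = 0 ∧ g 5 2 = 0 ∧ g 5 3 = 0 ∧ g 5 4 = 0 ∧ g 6 0 = 0 ∧ g 6 1 = 0 ∧ g 6 2 = 0 ∧ g 6 3 = 0 ∧ g 6 4 = 0 ∧ g 6 5 = 0 ∧ g 7 0 = 0 ∧ g 7 1 = 0 ∧ g 7 2 = 0 ∧ g 7 3 = 0 ∧ g 7 4 = 0 ∧ g 7 5 = 0 ∧ g 7 6 = 0 := ⟨hg 1 0 (by decide), hg 2 0 (by decide), hg 2 1 (by decide), hg 3 0 (by decide), hg 3 1 (by decide), hg 3 2 (by decide), hg 4 0 (by decide), hg 4 1 (by decide), hg 4 2 (by decide), hg 4 3 (by decide), hg 5 0 (by decide), hg 5 1 (by decide), hg 5 2 (by decide), hg 5 3 (by decide), hg 5 4 (by decide), hg 6 0 (by decide),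 hg 6 1 (by decide), hg 6 2 (by decide), hg 6 3 (by decide), hg 6 4 (by decide), hg 6 5 (by decide), hg 7 0 (by decide), hg 7 1 (by decide), hg 7 2 (by decide), hg 7 3 (by decide), hg 7 4 (by decide), hg 7 5 (by decide), hg 7 6 (by decide)⟩
  have hhz : g⁻¹ 1 0 = 0 ∧ g⁻¹ 2 0 = 0 ∧ g⁻¹ 2 1 = 0 ∧ g⁻¹ 3 0 = 0 ∧ g⁻¹ 3 1 = 0 ∧ g⁻¹ 3 2 = 0 ∧ g⁻¹ 4 0 = 0 ∧ g⁻¹ 4 1 = 0 ∧ g⁻¹ 4 2 = 0 ∧ g⁻¹ 4 3 = 0 ∧ g⁻¹ 5 0 = 0 ∧ g⁻¹ 5 1 = 0 ∧ g⁻¹ 5 2 = 0 ∧ g⁻¹ 5 3 = 0 ∧ g⁻¹ 5 4 = 0 ∧ g⁻¹ 6 0 = 0 ∧ g⁻¹ 6 1 = 0 ∧ g⁻¹ 6 2 = 0 ∧ g⁻¹ 6 3 = 0 ∧ g⁻¹ 6 4 = 0 ∧ g⁻¹ 6 5 = 0 ∧ g⁻¹ 7 0 = 0 ∧ g⁻¹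 7 1 = 0 ∧ g⁻¹ 7 2 = 0 ∧ g⁻¹ 7 3 = 0 ∧ g⁻¹ 7 4 = 0 ∧ g⁻¹ 7 5 = 0 ∧ g⁻¹ 7 6 = 0 := ⟨hh 1 0 (by decide), hh 2 0 (by decide), hh 2 1 (by decide), hh 3 0 (by decide), hh 3 1 (by decide), hh 3 2 (by decide), hh 4 0 (by decide), hh 4 1 (by decide), hh 4 2 (by decide), hh 4 3 (by decide), hh 5 0 (by decide), hh 5 1 (by decide), hh 5 2 (by decide), hh 5 3 (by decide), hh 5 4 (by decide), hh 6 0 (by decide), hh 6 1 (by decide), hh 6 2 (by decide), hh 6 3 (by decide), hh 6 4 (by decide), hh 6 5 (by decide), hh 7 0 (by decide), hh 7 1 (by decide), hh 7 2 (by decide), hh 7 3 (by decide), hh 7 4 (by decide), hh 7 5 (by decide), hh 7 6 (by decide)⟩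
  have hd : ∀ a : Fin 8, g⁻¹ a a = 1 := by
    intro a
    have := key a a
    fin_cases a <;>
      simp_all (config := {maxSteps := 10000000}) [Matrix.mul_apply, Fin.sum_univ_eight,
        hgz, hhz, hg1]
  have h34 : g⁻¹ 3 4 = -g 3 4 := by
    have := key 3 4
    simp (config := {maxSteps := 10000000}) [Matrix.mul_apply, Fin.sum_univ_eight, hgz,
      hhz, hg1, hd] at this
    linear_combination this
  have e23 : (g * X * g⁻¹) 2 3 = X 2 3 := by
    simp (config := {maxSteps := 10000000}) only [Matrix.mul_apply, Fin.sum_univ_eight, hXz, hgz, hhz, hg1, hd, h34, mul_zero, zero_mul, add_zero, zero_add, mul_one, one_mul]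
  have e24 : (g * X * g⁻¹) 2 4 = -(X 2 3 * g 3 4) + X 2 4 := by
    simp (config := {maxSteps := 10000000}) only [Matrix.mul_apply, Fin.sum_univ_eight, hXz, hgz, hhz, hg1, hd, h34, mul_zero, zero_mul, add_zero, zero_add, mul_one, one_mul]
    try ring
  have e36 : (g * X * g⁻¹) 3 6 = X 3 6 + g 3 4 * X 4 6 + g 3 5 * X 5 6 := by
    simp (config := {maxSteps := 10000000}) only [Matrix.mul_apply, Fin.sum_univ_eight, hXz, hgz, hhz, hg1, hd, h34, mul_zero, zero_mul, add_zero, zero_add, mul_one, one_mul]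
    try ring
  have e37 : (g * X * g⁻¹) 3 7 = (X 3 6 + g 3 4 * X 4 6 + g 3 5 * X 5 6) * g⁻¹ 6 7 + X 3 7 + g 3 4 * X 4 7 + g 3 5 * X 5 7 := by
    simp (config := {maxSteps := 10000000}) only [Matrix.mul_apply, Fin.sum_univ_eight, hXz, hgz, hhz, hg1, hd, h34, mul_zero, zero_mul, add_zero, zero_add, mul_one, one_mul]
    try ring
  have e46 : (g * X * g⁻¹) 4 6 = X 4 6 + g 4 5 * X 5 6 := by
    simp (config := {maxSteps := 10000000}) only [Matrix.mul_apply, Fin.sum_univ_eight, hXz, hgz, hhz, hg1, hd, h34, mul_zero, zero_mul, add_zero, zero_add, mul_one, one_mul]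
    try ring
  have e47 : (g * X * g⁻¹) 4 7 = (X 4 6 + g 4 5 * X 5 6) * g⁻¹ 6 7 + X 4 7 + g 4 5 * X 5 7 := by
    simp (config := {maxSteps := 10000000}) only [Matrix.mul_apply, Fin.sum_univ_eight, hXz, hgz, hhz, hg1, hd, h34, mul_zero, zero_mul, add_zero, zero_add, mul_one, one_mul]
    try ring
  have e56 : (g * X * g⁻¹) 5 6 = X 5 6 := by
    simp (config := {maxSteps := 10000000}) only [Matrix.mul_apply, Fin.sum_univ_eight, hXz, hgz, hhz, hg1, hd, h34, mul_zero, zero_mul, add_zero, zero_add, mul_one, one_mul]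
  have e57 : (g * X * g⁻¹) 5 7 = X 5 6 * g⁻¹ 6 7 + X 5 7 := by
    simp (config := {maxSteps := 10000000}) only [Matrix.mul_apply, Fin.sum_univ_eight, hXz, hgz, hhz, hg1, hd, h34, mul_zero, zero_mul, add_zero, zero_add, mul_one, one_mul]
    try ring
  rw [L48, L48, e23, e24, e36, e37, e46, e47, e56, e57]
  ring
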